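/- For all positive integers a, b, c it holds that f(a,b,c) ≥ ⌊(a+b+c)/2⌋ − 1. -/

import Mathlib

/-- A question (and a secret) for `(a,b,c)`-Mastermind is a triple in
`Fin a × Fin b × Fin c`. -/
abbrev Question (a b c : ℕ) := Fin a × Fin b × Fin c

/-- `g s q` is the number of coordinates in which `s` and `q` agree. -/
def g {a b c : ℕ} (s q : Question a b c) : ℕ :=
  (if s.1 = q.1 then 1 else 0) + (if s.2.1 = q.2.1 then 1 else 0) +
    (if s.2.2 = q.2.2 then 1 else 0)

/-- A finite set of questions is a feasible strategy if every pair of distinct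
secrets is distinguished by some question. -/
def Feasible {a b c : ℕ} (Q : Finset (Question a b c)) : Prop :=
  ∀ s s' : Question a b c, s ≠ s' → ∃ q ∈ Q, g s q ≠ g s' q

/-- `f a b c` is the minimum cardinality of a feasible strategy for
`(a,b,c)`-Mastermind. -/
noncomputable def f (a b c : ℕ) : ℕ :=
  sInf {n : ℕ | ∃ Q : Finset (Question a b c), Feasible Q ∧ Q.card = n}


open Finset

/-- helper: unique member of a card-one filter -/
lemma MM.card_one_unique {α : Type*} {s : Finset α} {p : α → Prop} [DecidablePred p]
    (h : (s.filter p).card = 1) {x y : α} (hx : x ∈ s) (hpx : p x) (hy : y ∈ s) (hpy : p y) :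
    x = y :=
  Finset.card_le_one.mp h.le x (mem_filter.mpr ⟨hx, hpx⟩) y (mem_filter.mpr ⟨hy, hpy⟩)

/-- counting: twice the number of used values is at most #Q plus the number of
questions whose fiber (in the given coordinate) is a singleton. -/
lemma MM.count_coord {ι κ : Type*} [DecidableEq ι] [Fintype κ] [DecidableEq κ]
    (Q : Finset ι) (φ : ι → κ) :
    2 * (univ.filter (fun x => ∃ q ∈ Q, φ q = x)).card ≤
      Q.card + (Q.filter (fun q => (Q.filter (fun r => φ r = φ q)).card = 1)).card := by
  classical
  set U : Finset κ := univ.filter (fun x => ∃ q ∈ Q, φ q = x) with hU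
  set T : Finset ι := Q.filter (fun q => (Q.filter (fun r => φ r = φ q)).card = 1) with hT
  have hQc : Q.card = ∑ x ∈ U, (Q.filter (fun q => φ q = x)).card := by
    apply card_eq_sum_card_fiberwise
    intro q hq
    simp only [mem_coe, hU, mem_filter, mem_univ, true_and]
    exact ⟨q, hq, rfl⟩
  have hTc : T.card = ∑ x ∈ U, (T.filter (fun q => φ q = x)).card := by
    apply card_eq_sum_card_fiberwise
    intro q hq
    have hq' : q ∈ Q := mem_of_mem_filter q hq
    simp only [mem_coe, hU, mem_filter, mem_univ, true_and]
    exact ⟨q, hq', rfl⟩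
  have key : ∀ x ∈ U, 2 ≤ (Q.filter (fun q => φ q = x)).card + (T.filter (fun q => φ q = x)).card := by
    intro x hx
    simp only [hU, mem_filter, mem_univ, true_and] at hx
    obtain ⟨q0, hq0, hφ⟩ := hx
    have h1 : 1 ≤ (Q.filter (fun q => φ q = x)).card :=
      card_pos.mpr ⟨q0, mem_filter.mpr ⟨hq0, hφ⟩⟩
    rcases Nat.lt_or_ge (Q.filter (fun q => φ q = x)).card 2 with hlt | hge
    · have hone : (Q.filter (fun q => φ q = x)).card = 1 := by omega
      have hq0T : q0 ∈ T.filter (fun q => φ q = x) := by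
        refine mem_filter.mpr ⟨mem_filter.mpr ⟨hq0, ?_⟩, hφ⟩
        have : (Q.filter (fun r => φ r = φ q0)) = (Q.filter (fun q => φ q = x)) := by
          apply filter_congr; intro r _; rw [hφ]
        rw [this, hone]
      have : 1 ≤ (T.filter (fun q => φ q = x)).card := card_pos.mpr ⟨q0, hq0T⟩
      omega
    · omega
  calc 2 * U.card = ∑ _x ∈ U, 2 := by rw [sum_const, smul_eq_mul, mul_comm]
    _ ≤ ∑ x ∈ U, ((Q.filter (fun q => φ q = x)).card + (T.filter (fun q => φ q = x)).card) :=
        sum_le_sum key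
    _ = Q.card + T.card := by rw [sum_add_distrib, ← hQc, ← hTc]


lemma MM.unused1 {a b c : ℕ} (hb : 0 < b) (hc : 0 < c)
    (Q : Finset (Question a b c)) (hQ : Feasible Q) :
    (univ.filter (fun x : Fin a => ¬ ∃ q ∈ Q, q.1 = x)).card ≤ 1 := by
  by_contra h
  push_neg at h
  obtain ⟨x, hx, x', hx', hne⟩ := Finset.one_lt_card.mp h
  simp only [mem_filter, mem_univ, true_and, not_exists] at hx hx'
  obtain ⟨q, hqQ, hgne⟩ := hQ (x, ⟨0, hb⟩, ⟨0, hc⟩) (x', ⟨0, hb⟩, ⟨0, hc⟩)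
    (by simp [Prod.ext_iff, hne])
  exact hgne (by
    have h1 : x ≠ q.1 := fun h => hx q hqQ h.symm
    have h2 : x' ≠ q.1 := fun h => hx' q hqQ h.symm
    simp [g, h1, h2])

lemma MM.unused2 {a b c : ℕ} (ha : 0 < a) (hc : 0 < c)
    (Q : Finset (Question a b c)) (hQ : Feasible Q) :
    (univ.filter (fun y : Fin b => ¬ ∃ q ∈ Q, q.2.1 = y)).card ≤ 1 := by
  by_contra h
  push_neg at h
  obtain ⟨y, hy, y', hy', hne⟩ := Finset.one_lt_card.mp h
  simp only [mem_filter, mem_univ, true_and, not_exists] at hy hy'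
  obtain ⟨q, hqQ, hgne⟩ := hQ (⟨0, ha⟩, y, ⟨0, hc⟩) (⟨0, ha⟩, y', ⟨0, hc⟩)
    (by simp [Prod.ext_iff, hne])
  exact hgne (by
    have h1 : y ≠ q.2.1 := fun h => hy q hqQ h.symm
    have h2 : y' ≠ q.2.1 := fun h => hy' q hqQ h.symm
    simp [g, h1, h2])

lemma MM.unused3 {a b c : ℕ} (ha : 0 < a) (hb : 0 < b)
    (Q : Finset (Question a b c)) (hQ : Feasible Q) :
    (univ.filter (fun z : Fin c => ¬ ∃ q ∈ Q, q.2.2 = z)).card ≤ 1 := by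
  by_contra h
  push_neg at h
  obtain ⟨z, hz, z', hz', hne⟩ := Finset.one_lt_card.mp h
  simp only [mem_filter, mem_univ, true_and, not_exists] at hz hz'
  obtain ⟨q, hqQ, hgne⟩ := hQ (⟨0, ha⟩, ⟨0, hb⟩, z) (⟨0, ha⟩, ⟨0, hb⟩, z')
    (by simp [Prod.ext_iff, hne])
  exact hgne (by
    have h1 : z ≠ q.2.2 := fun h => hz q hqQ h.symm
    have h2 : z' ≠ q.2.2 := fun h => hz' q hqQ h.symm
    simp [g, h1, h2])


lemma MM.pair12_le_one {a b c : ℕ} (hc : 0 < c)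
    (Q : Finset (Question a b c)) (hQ : Feasible Q) :
    (Q.filter (fun q => (Q.filter (fun r => r.1 = q.1)).card = 1 ∧
      (Q.filter (fun r => r.2.1 = q.2.1)).card = 1)).card ≤ 1 := by
  by_contra h
  push_neg at h
  obtain ⟨q, hq, q', hq', hne⟩ := Finset.one_lt_card.mp h
  obtain ⟨hqQ, hs1, hs2⟩ := mem_filter.mp hq
  obtain ⟨hqQ', hs1', hs2'⟩ := mem_filter.mp hq'
  have h1 : q.1 ≠ q'.1 := fun h => hne (MM.card_one_unique hs1 hqQ rfl hqQ' h.symm)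
  have h2 : q.2.1 ≠ q'.2.1 := fun h => hne (MM.card_one_unique hs2 hqQ rfl hqQ' h.symm)
  obtain ⟨r, hrQ, hgne⟩ := hQ (q.1, q'.2.1, ⟨0, hc⟩) (q'.1, q.2.1, ⟨0, hc⟩)
    (by simp [Prod.ext_iff]; intro h; exact absurd h h1)
  apply hgne
  by_cases hrq : r = q
  · subst hrq
    simp [g, h1.symm, h2.symm] <;> ring
  by_cases hrq' : r = q'
  · subst hrq'
    simp [g, h1, h2] <;> ring
  · have hr1 : q.1 ≠ r.1 := fun h => hrq (MM.card_one_unique hs1 hrQ h.symm hqQ rfl)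
    have hr1' : q'.1 ≠ r.1 := fun h => hrq' (MM.card_one_unique hs1' hrQ h.symm hqQ' rfl)
    have hr2 : q.2.1 ≠ r.2.1 := fun h => hrq (MM.card_one_unique hs2 hrQ h.symm hqQ rfl)
    have hr2' : q'.2.1 ≠ r.2.1 := fun h => hrq' (MM.card_one_unique hs2' hrQ h.symm hqQ' rfl)
    simp [g, hr1, hr1', hr2, hr2'] <;> ring

lemma MM.pair12_zero {a b c : ℕ} (hc : 0 < c)
    (Q : Finset (Question a b c)) (hQ : Feasible Q)
    {x' : Fin a} (hx' : ∀ r ∈ Q, r.1 ≠ x') {y' : Fin b} (hy' : ∀ r ∈ Q, r.2.1 ≠ y') :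
    (Q.filter (fun q => (Q.filter (fun r => r.1 = q.1)).card = 1 ∧
      (Q.filter (fun r => r.2.1 = q.2.1)).card = 1)).card = 0 := by
  rw [Finset.card_eq_zero, Finset.filter_eq_empty_iff]
  rintro q hqQ ⟨hs1, hs2⟩
  have hxq : q.1 ≠ x' := hx' q hqQ
  obtain ⟨r, hrQ, hgne⟩ := hQ (q.1, y', ⟨0, hc⟩) (x', q.2.1, ⟨0, hc⟩)
    (by simp [Prod.ext_iff]; intro h; exact absurd h hxq)
  apply hgne
  by_cases hrq : r = q
  · subst hrq
    have h1 : y' ≠ r.2.1 := fun h => hy' r hrQ h.symm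
    have h2 : x' ≠ r.1 := fun h => hx' r hrQ h.symm
    simp [g, h1, h2] <;> ring
  · have hr1 : q.1 ≠ r.1 := fun h => hrq (MM.card_one_unique hs1 hrQ h.symm hqQ rfl)
    have hr2 : q.2.1 ≠ r.2.1 := fun h => hrq (MM.card_one_unique hs2 hrQ h.symm hqQ rfl)
    have h1 : y' ≠ r.2.1 := fun h => hy' r hrQ h.symm
    have h2 : x' ≠ r.1 := fun h => hx' r hrQ h.symm
    simp [g, hr1, hr2, h1, h2] <;> ring

lemma MM.pair13_le_one {a b c : ℕ} (hb : 0 < b)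
    (Q : Finset (Question a b c)) (hQ : Feasible Q) :
    (Q.filter (fun q => (Q.filter (fun r => r.1 = q.1)).card = 1 ∧
      (Q.filter (fun r => r.2.2 = q.2.2)).card = 1)).card ≤ 1 := by
  by_contra h
  push_neg at h
  obtain ⟨q, hq, q', hq', hne⟩ := Finset.one_lt_card.mp h
  obtain ⟨hqQ, hs1, hs3⟩ := mem_filter.mp hq
  obtain ⟨hqQ', hs1', hs3'⟩ := mem_filter.mp hq'
  have h1 : q.1 ≠ q'.1 := fun h => hne (MM.card_one_unique hs1 hqQ rfl hqQ' h.symm)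
  have h3 : q.2.2 ≠ q'.2.2 := fun h => hne (MM.card_one_unique hs3 hqQ rfl hqQ' h.symm)
  obtain ⟨r, hrQ, hgne⟩ := hQ (q.1, ⟨0, hb⟩, q'.2.2) (q'.1, ⟨0, hb⟩, q.2.2)
    (by simp [Prod.ext_iff]; intro h; exact absurd h h1)
  apply hgne
  by_cases hrq : r = q
  · subst hrq
    simp [g, h1.symm, h3.symm] <;> ring
  by_cases hrq' : r = q'
  · subst hrq'
    simp [g, h1, h3] <;> ring
  · have hr1 : q.1 ≠ r.1 := fun h => hrq (MM.card_one_unique hs1 hrQ h.symm hqQ rfl)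
    have hr1' : q'.1 ≠ r.1 := fun h => hrq' (MM.card_one_unique hs1' hrQ h.symm hqQ' rfl)
    have hr3 : q.2.2 ≠ r.2.2 := fun h => hrq (MM.card_one_unique hs3 hrQ h.symm hqQ rfl)
    have hr3' : q'.2.2 ≠ r.2.2 := fun h => hrq' (MM.card_one_unique hs3' hrQ h.symm hqQ' rfl)
    simp [g, hr1, hr1', hr3, hr3'] <;> ring

lemma MM.pair13_zero {a b c : ℕ} (hb : 0 < b)
    (Q : Finset (Question a b c)) (hQ : Feasible Q)
    {x' : Fin a} (hx' : ∀ r ∈ Q, r.1 ≠ x') {z' : Fin c} (hz' : ∀ r ∈ Q, r.2.2 ≠ z') :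
    (Q.filter (fun q => (Q.filter (fun r => r.1 = q.1)).card = 1 ∧
      (Q.filter (fun r => r.2.2 = q.2.2)).card = 1)).card = 0 := by
  rw [Finset.card_eq_zero, Finset.filter_eq_empty_iff]
  rintro q hqQ ⟨hs1, hs3⟩
  have hxq : q.1 ≠ x' := hx' q hqQ
  obtain ⟨r, hrQ, hgne⟩ := hQ (q.1, ⟨0, hb⟩, z') (x', ⟨0, hb⟩, q.2.2)
    (by simp [Prod.ext_iff]; intro h; exact absurd h hxq)
  apply hgne
  by_cases hrq : r = q
  · subst hrq
    have h1 : z' ≠ r.2.2 := fun h => hz' r hrQ h.symm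
    have h2 : x' ≠ r.1 := fun h => hx' r hrQ h.symm
    simp [g, h1, h2] <;> ring
  · have hr1 : q.1 ≠ r.1 := fun h => hrq (MM.card_one_unique hs1 hrQ h.symm hqQ rfl)
    have hr3 : q.2.2 ≠ r.2.2 := fun h => hrq (MM.card_one_unique hs3 hrQ h.symm hqQ rfl)
    have h1 : z' ≠ r.2.2 := fun h => hz' r hrQ h.symm
    have h2 : x' ≠ r.1 := fun h => hx' r hrQ h.symm
    simp [g, hr1, hr3, h1, h2] <;> ring

lemma MM.pair23_le_one {a b c : ℕ} (ha : 0 < a)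
    (Q : Finset (Question a b c)) (hQ : Feasible Q) :
    (Q.filter (fun q => (Q.filter (fun r => r.2.1 = q.2.1)).card = 1 ∧
      (Q.filter (fun r => r.2.2 = q.2.2)).card = 1)).card ≤ 1 := by
  by_contra h
  push_neg at h
  obtain ⟨q, hq, q', hq', hne⟩ := Finset.one_lt_card.mp h
  obtain ⟨hqQ, hs2, hs3⟩ := mem_filter.mp hq
  obtain ⟨hqQ', hs2', hs3'⟩ := mem_filter.mp hq'
  have h2 : q.2.1 ≠ q'.2.1 := fun h => hne (MM.card_one_unique hs2 hqQ rfl hqQ' h.symm)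
  have h3 : q.2.2 ≠ q'.2.2 := fun h => hne (MM.card_one_unique hs3 hqQ rfl hqQ' h.symm)
  obtain ⟨r, hrQ, hgne⟩ := hQ (⟨0, ha⟩, q.2.1, q'.2.2) (⟨0, ha⟩, q'.2.1, q.2.2)
    (by simp [Prod.ext_iff]; intro h; exact absurd h h2)
  apply hgne
  by_cases hrq : r = q
  · subst hrq
    simp [g, h2.symm, h3.symm] <;> ring
  by_cases hrq' : r = q'
  · subst hrq'
    simp [g, h2, h3] <;> ring
  · have hr2 : q.2.1 ≠ r.2.1 := fun h => hrq (MM.card_one_unique hs2 hrQ h.symm hqQ rfl)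
    have hr2' : q'.2.1 ≠ r.2.1 := fun h => hrq' (MM.card_one_unique hs2' hrQ h.symm hqQ' rfl)
    have hr3 : q.2.2 ≠ r.2.2 := fun h => hrq (MM.card_one_unique hs3 hrQ h.symm hqQ rfl)
    have hr3' : q'.2.2 ≠ r.2.2 := fun h => hrq' (MM.card_one_unique hs3' hrQ h.symm hqQ' rfl)
    simp [g, hr2, hr2', hr3, hr3'] <;> ring

lemma MM.pair23_zero {a b c : ℕ} (ha : 0 < a)
    (Q : Finset (Question a b c)) (hQ : Feasible Q)
    {y' : Fin b} (hy' : ∀ r ∈ Q, r.2.1 ≠ y') {z' : Fin c} (hz' : ∀ r ∈ Q, r.2.2 ≠ z') :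
    (Q.filter (fun q => (Q.filter (fun r => r.2.1 = q.2.1)).card = 1 ∧
      (Q.filter (fun r => r.2.2 = q.2.2)).card = 1)).card = 0 := by
  rw [Finset.card_eq_zero, Finset.filter_eq_empty_iff]
  rintro q hqQ ⟨hs2, hs3⟩
  have hyq : q.2.1 ≠ y' := hy' q hqQ
  obtain ⟨r, hrQ, hgne⟩ := hQ (⟨0, ha⟩, q.2.1, z') (⟨0, ha⟩, y', q.2.2)
    (by simp [Prod.ext_iff]; intro h; exact absurd h hyq)
  apply hgne
  by_cases hrq : r = q
  · subst hrq
    have h1 : z' ≠ r.2.2 := fun h => hz' r hrQ h.symm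
    have h2 : y' ≠ r.2.1 := fun h => hy' r hrQ h.symm
    simp [g, h1, h2] <;> ring
  · have hr2 : q.2.1 ≠ r.2.1 := fun h => hrq (MM.card_one_unique hs2 hrQ h.symm hqQ rfl)
    have hr3 : q.2.2 ≠ r.2.2 := fun h => hrq (MM.card_one_unique hs3 hrQ h.symm hqQ rfl)
    have h1 : z' ≠ r.2.2 := fun h => hz' r hrQ h.symm
    have h2 : y' ≠ r.2.1 := fun h => hy' r hrQ h.symm
    simp [g, hr2, hr3, h1, h2] <;> ring


lemma MM.ite_ineq (P1 P2 P3 : Prop) [Decidable P1] [Decidable P2] [Decidable P3] :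
    (if P1 then (1:ℕ) else 0) + (if P2 then 1 else 0) + (if P3 then 1 else 0) ≤
      1 + ((if P1 ∧ P2 then 1 else 0) + (if P1 ∧ P3 then 1 else 0) + (if P2 ∧ P3 then 1 else 0)) := by
  by_cases h1 : P1 <;> by_cases h2 : P2 <;> by_cases h3 : P3 <;> simp [h1, h2, h3]

lemma MM.sum_three {ι : Type*} [DecidableEq ι] (Q : Finset ι)
    (p1 p2 p3 : ι → Prop) [DecidablePred p1] [DecidablePred p2] [DecidablePred p3] :
    (Q.filter p1).card + (Q.filter p2).card + (Q.filter p3).card ≤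
      Q.card + ((Q.filter (fun q => p1 q ∧ p2 q)).card + (Q.filter (fun q => p1 q ∧ p3 q)).card +
        (Q.filter (fun q => p2 q ∧ p3 q)).card) := by
  classical
  have h := Finset.sum_le_sum (s := Q)
    (f := fun q => (if p1 q then (1:ℕ) else 0) + (if p2 q then 1 else 0) + (if p3 q then 1 else 0))
    (g := fun q => 1 + ((if p1 q ∧ p2 q then (1:ℕ) else 0) + (if p1 q ∧ p3 q then 1 else 0) +
      (if p2 q ∧ p3 q then 1 else 0)))
    (fun q _ => MM.ite_ineq (p1 q) (p2 q) (p3 q))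
  have e1 : (Q.filter p1).card + (Q.filter p2).card + (Q.filter p3).card =
      ∑ q ∈ Q, ((if p1 q then (1:ℕ) else 0) + (if p2 q then 1 else 0) + (if p3 q then 1 else 0)) := by
    rw [Finset.sum_add_distrib, Finset.sum_add_distrib, Finset.card_filter, Finset.card_filter,
      Finset.card_filter]
  have e2 : Q.card + ((Q.filter (fun q => p1 q ∧ p2 q)).card + (Q.filter (fun q => p1 q ∧ p3 q)).card +
      (Q.filter (fun q => p2 q ∧ p3 q)).card) =
      ∑ q ∈ Q, (1 + ((if p1 q ∧ p2 q then (1:ℕ) else 0) + (if p1 q ∧ p3 q then 1 else 0) +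
        (if p2 q ∧ p3 q then 1 else 0))) := by
    rw [Finset.sum_add_distrib, Finset.sum_add_distrib, Finset.sum_add_distrib,
      Finset.card_filter, Finset.card_filter, Finset.card_filter, Finset.card_eq_sum_ones]
  rw [e1, e2]
  exact h


lemma MM.key {a b c : ℕ} (ha : 0 < a) (hb : 0 < b) (hc : 0 < c)
    (Q : Finset (Question a b c)) (hQ : Feasible Q) :
    a + b + c ≤ 2 * Q.card + 3 := by
  classical
  -- counting per coordinate
  have hc1 : 2 * (univ.filter (fun x : Fin a => ∃ q ∈ Q, q.1 = x)).card ≤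
      Q.card + (Q.filter (fun q => (Q.filter (fun r => r.1 = q.1)).card = 1)).card :=
    MM.count_coord Q (fun q => q.1)
  have hc2 : 2 * (univ.filter (fun y : Fin b => ∃ q ∈ Q, q.2.1 = y)).card ≤
      Q.card + (Q.filter (fun q => (Q.filter (fun r => r.2.1 = q.2.1)).card = 1)).card :=
    MM.count_coord Q (fun q => q.2.1)
  have hc3 : 2 * (univ.filter (fun z : Fin c => ∃ q ∈ Q, q.2.2 = z)).card ≤
      Q.card + (Q.filter (fun q => (Q.filter (fun r => r.2.2 = q.2.2)).card = 1)).card :=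
    MM.count_coord Q (fun q => q.2.2)
  -- used + unused = total
  have hu1 : (univ.filter (fun x : Fin a => ∃ q ∈ Q, q.1 = x)).card +
      (univ.filter (fun x : Fin a => ¬ ∃ q ∈ Q, q.1 = x)).card = a := by
    rw [Finset.card_filter_add_card_filter_not, card_univ, Fintype.card_fin]
  have hu2 : (univ.filter (fun y : Fin b => ∃ q ∈ Q, q.2.1 = y)).card +
      (univ.filter (fun y : Fin b => ¬ ∃ q ∈ Q, q.2.1 = y)).card = b := by
    rw [Finset.card_filter_add_card_filter_not, card_univ, Fintype.card_fin]
  have hu3 : (univ.filter (fun z : Fin c => ∃ q ∈ Q, q.2.2 = z)).card +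
      (univ.filter (fun z : Fin c => ¬ ∃ q ∈ Q, q.2.2 = z)).card = c := by
    rw [Finset.card_filter_add_card_filter_not, card_univ, Fintype.card_fin]
  have he1 := MM.unused1 hb hc Q hQ
  have he2 := MM.unused2 ha hc Q hQ
  have he3 := MM.unused3 ha hb Q hQ
  -- sum of singleton counts
  have hsum := MM.sum_three Q
    (fun q => (Q.filter (fun r => r.1 = q.1)).card = 1)
    (fun q => (Q.filter (fun r => r.2.1 = q.2.1)).card = 1)
    (fun q => (Q.filter (fun r => r.2.2 = q.2.2)).card = 1)
  -- pair bounds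
  have hp12 : (univ.filter (fun x : Fin a => ¬ ∃ q ∈ Q, q.1 = x)).card +
      (univ.filter (fun y : Fin b => ¬ ∃ q ∈ Q, q.2.1 = y)).card +
      (Q.filter (fun q => (Q.filter (fun r => r.1 = q.1)).card = 1 ∧
        (Q.filter (fun r => r.2.1 = q.2.1)).card = 1)).card ≤ 2 := by
    have hd := MM.pair12_le_one hc Q hQ
    rcases Nat.eq_zero_or_pos (univ.filter (fun x : Fin a => ¬ ∃ q ∈ Q, q.1 = x)).card with h1 | h1
    · omega
    rcases Nat.eq_zero_or_pos (univ.filter (fun y : Fin b => ¬ ∃ q ∈ Q, q.2.1 = y)).card with h2 | h2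
    · omega
    obtain ⟨x', hx'⟩ := Finset.card_pos.mp h1
    obtain ⟨y', hy'⟩ := Finset.card_pos.mp h2
    simp only [mem_filter, mem_univ, true_and, not_exists] at hx' hy'
    have hz := MM.pair12_zero hc Q hQ (x' := x') (fun r hr h => hx' r ⟨hr, h⟩) (y' := y') (fun r hr h => hy' r ⟨hr, h⟩)
    omega
  have hp13 : (univ.filter (fun x : Fin a => ¬ ∃ q ∈ Q, q.1 = x)).card +
      (univ.filter (fun z : Fin c => ¬ ∃ q ∈ Q, q.2.2 = z)).card +
      (Q.filter (fun q => (Q.filter (fun r => r.1 = q.1)).card = 1 ∧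
        (Q.filter (fun r => r.2.2 = q.2.2)).card = 1)).card ≤ 2 := by
    have hd := MM.pair13_le_one hb Q hQ
    rcases Nat.eq_zero_or_pos (univ.filter (fun x : Fin a => ¬ ∃ q ∈ Q, q.1 = x)).card with h1 | h1
    · omega
    rcases Nat.eq_zero_or_pos (univ.filter (fun z : Fin c => ¬ ∃ q ∈ Q, q.2.2 = z)).card with h2 | h2
    · omega
    obtain ⟨x', hx'⟩ := Finset.card_pos.mp h1
    obtain ⟨z', hz'⟩ := Finset.card_pos.mp h2
    simp only [mem_filter, mem_univ, true_and, not_exists] at hx' hz'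
    have hz := MM.pair13_zero hb Q hQ (x' := x') (fun r hr h => hx' r ⟨hr, h⟩) (z' := z') (fun r hr h => hz' r ⟨hr, h⟩)
    omega
  have hp23 : (univ.filter (fun y : Fin b => ¬ ∃ q ∈ Q, q.2.1 = y)).card +
      (univ.filter (fun z : Fin c => ¬ ∃ q ∈ Q, q.2.2 = z)).card +
      (Q.filter (fun q => (Q.filter (fun r => r.2.1 = q.2.1)).card = 1 ∧
        (Q.filter (fun r => r.2.2 = q.2.2)).card = 1)).card ≤ 2 := by
    have hd := MM.pair23_le_one ha Q hQ
    rcases Nat.eq_zero_or_pos (univ.filter (fun y : Fin b => ¬ ∃ q ∈ Q, q.2.1 = y)).card with h1 | h1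
    · omega
    rcases Nat.eq_zero_or_pos (univ.filter (fun z : Fin c => ¬ ∃ q ∈ Q, q.2.2 = z)).card with h2 | h2
    · omega
    obtain ⟨y', hy'⟩ := Finset.card_pos.mp h1
    obtain ⟨z', hz'⟩ := Finset.card_pos.mp h2
    simp only [mem_filter, mem_univ, true_and, not_exists] at hy' hz'
    have hz := MM.pair23_zero ha Q hQ (y' := y') (fun r hr h => hy' r ⟨hr, h⟩) (z' := z') (fun r hr h => hz' r ⟨hr, h⟩)
    omega
  omega


theorem f_general_lower_bound (a b c : ℕ) (ha : 0 < a) (hb : 0 < b) (hc : 0 < c) :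
    (a + b + c) / 2 - 1 ≤ f a b c := by
  have hfeas : Feasible (univ : Finset (Question a b c)) := by
    intro s s' hne
    refine ⟨s, mem_univ s, fun h => hne ?_⟩
    have h3 : g s' s = 3 := by rw [← h]; simp [g]
    unfold g at h3
    split_ifs at h3 with h1 h2 h4 <;> try omega
    exact Prod.ext h1.symm (Prod.ext h2.symm h4.symm)
  have hne : {n : ℕ | ∃ Q : Finset (Question a b c), Feasible Q ∧ Q.card = n}.Nonempty :=
    ⟨(univ : Finset (Question a b c)).card, univ, hfeas, rfl⟩
  obtain ⟨Q, hQ, hcard⟩ := Nat.sInf_mem hne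
  have := MM.key ha hb hc Q hQ
  unfold f
  omega
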